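/- Let G, K ∈ ℝ^{n×n} be invertible with I + GK invertible, S = (I + GK)⁻¹, Λ ∈ ℝ^{n×n}, and set Π = G and Π̂ = ΛG + (I − Λ)(−K⁻¹). Then Π Π̂ᵀ + Π̂ Πᵀ is positive definite if and only if for all nonzero x ∈ ℝⁿ, xᵀ (I − Λ)(K S)⁻¹ Gᵀ x < xᵀ G Gᵀ x, i.e. if and only if condition (C): (1/2)(I − Λ)(K S)⁻¹Gᵀ + (1/2)((I − Λ)(K S)⁻¹Gᵀ)ᵀ ≺ G Gᵀ holds. -/

import Mathlib

open Matrix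

lemma quad_transpose_eq {n : ℕ} (A : Matrix (Fin n) (Fin n) ℝ) (x : Fin n → ℝ) :
    x ⬝ᵥ A.transpose.mulVec x = x ⬝ᵥ A.mulVec x := by
  rw [Matrix.mulVec_transpose, Matrix.dotProduct_mulVec, dotProduct_comm]

/-- With `Π = G` and `Π̂ = ΛG + (I − Λ)(−K⁻¹)`, the matrix
`Π Π̂ᵀ + Π̂ Πᵀ` is positive definite iff `xᵀ(I − Λ)(KS)⁻¹Gᵀx < xᵀGGᵀx` for all `x ≠ 0`,
i.e. iff condition (C): `(1/2)(I − Λ)(KS)⁻¹Gᵀ + (1/2)((I − Λ)(KS)⁻¹Gᵀ)ᵀ ≺ GGᵀ`. -/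
theorem stmt13 {n : ℕ} (G K : Matrix (Fin n) (Fin n) ℝ)
    (hG : IsUnit G.det) (hK : IsUnit K.det) (hGK : IsUnit (1 + G * K).det)
    (S : Matrix (Fin n) (Fin n) ℝ) (hS : S = (1 + G * K)⁻¹)
    (Λ P Phat : Matrix (Fin n) (Fin n) ℝ)
    (hP : P = G) (hPhat : Phat = Λ * G + (1 - Λ) * (-K⁻¹)) :
    ((P * Phat.transpose + Phat * P.transpose).PosDef ↔
      ∀ x : Fin n → ℝ, x ≠ 0 →
        x ⬝ᵥ ((1 - Λ) * (K * S)⁻¹ * G.transpose).mulVec x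
          < x ⬝ᵥ (G * G.transpose).mulVec x) ∧
    ((P * Phat.transpose + Phat * P.transpose).PosDef ↔
      (G * G.transpose -
        ((1 / 2 : ℝ) • ((1 - Λ) * (K * S)⁻¹ * G.transpose) +
          (1 / 2 : ℝ) • ((1 - Λ) * (K * S)⁻¹ * G.transpose).transpose)).PosDef) := by
  subst hP hPhat
  set A : Matrix (Fin n) (Fin n) ℝ := (1 - Λ) * (K * S)⁻¹ * P.transpose with hA
  have hKS : (K * S)⁻¹ = K⁻¹ + P := by
    rw [hS, Matrix.mul_inv_rev, Matrix.nonsing_inv_nonsing_inv _ hGK, add_mul, one_mul,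
      mul_assoc, Matrix.mul_nonsing_inv _ hK, mul_one]
  have hPhatG : (Λ * P + (1 - Λ) * (-K⁻¹)) * P.transpose = P * P.transpose - A := by
    rw [hA, hKS]; noncomm_ring
  have hM : P * (Λ * P + (1 - Λ) * (-K⁻¹)).transpose + (Λ * P + (1 - Λ) * (-K⁻¹)) * P.transpose
      = (P * P.transpose - A).transpose + (P * P.transpose - A) := by
    rw [← hPhatG, Matrix.transpose_mul, Matrix.transpose_transpose]
  have quadM : ∀ x : Fin n → ℝ,
      x ⬝ᵥ ((P * (Λ * P + (1 - Λ) * (-K⁻¹)).transpose +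
        (Λ * P + (1 - Λ) * (-K⁻¹)) * P.transpose)).mulVec x
      = 2 * (x ⬝ᵥ (P * P.transpose).mulVec x - x ⬝ᵥ A.mulVec x) := by
    intro x
    rw [hM, Matrix.add_mulVec, dotProduct_add, quad_transpose_eq, Matrix.sub_mulVec,
      dotProduct_sub]
    ring
  set D : Matrix (Fin n) (Fin n) ℝ := P * P.transpose -
      ((1 / 2 : ℝ) • A + (1 / 2 : ℝ) • A.transpose) with hD
  have quadD : ∀ x : Fin n → ℝ,
      x ⬝ᵥ D.mulVec x = x ⬝ᵥ (P * P.transpose).mulVec x - x ⬝ᵥ A.mulVec x := by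
    intro x
    rw [hD, Matrix.sub_mulVec, dotProduct_sub, Matrix.add_mulVec, dotProduct_add,
      Matrix.smul_mulVec, Matrix.smul_mulVec, dotProduct_smul, dotProduct_smul,
      quad_transpose_eq]
    simp only [smul_eq_mul]
    ring
  have hermM : (P * (Λ * P + (1 - Λ) * (-K⁻¹)).transpose +
      (Λ * P + (1 - Λ) * (-K⁻¹)) * P.transpose).IsHermitian := by
    rw [Matrix.IsHermitian, Matrix.conjTranspose_eq_transpose_of_trivial, hM,
      Matrix.transpose_add, Matrix.transpose_transpose, add_comm]
  have hermD : D.IsHermitian := by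
    rw [Matrix.IsHermitian, Matrix.conjTranspose_eq_transpose_of_trivial, hD,
      Matrix.transpose_sub, Matrix.transpose_add, Matrix.transpose_smul, Matrix.transpose_smul,
      Matrix.transpose_transpose, Matrix.transpose_mul, Matrix.transpose_transpose, add_comm]
  have hstar : ∀ x : Fin n → ℝ, star x = x := fun x => by simp
  constructor
  · constructor
    · intro h x hx
      have := h.dotProduct_mulVec_pos hx
      rw [hstar, quadM] at this
      linarith
    · intro h
      refine Matrix.PosDef.of_dotProduct_mulVec_pos hermM (fun x hx => ?_)
      rw [hstar, quadM]
      have := h x hx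
      linarith
  · constructor
    · intro h
      refine Matrix.PosDef.of_dotProduct_mulVec_pos hermD (fun x hx => ?_)
      have := h.dotProduct_mulVec_pos hx
      rw [hstar, quadM] at this
      rw [hstar, quadD]
      linarith
    · intro h
      refine Matrix.PosDef.of_dotProduct_mulVec_pos hermM (fun x hx => ?_)
      have := h.dotProduct_mulVec_pos hx
      rw [hstar, quadD] at this
      rw [hstar, quadM]
      linarith
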